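/- arXiv:1603.01495 — 3 statements merged into one kernel-verified Lean document; each statement's English description precedes it below -/
import Mathlib

section
/- For t > 0 and s ∈ ℝ with z = t + is, and any d ≥ 0, the complex-time heat kernel on the hyperbolic plane satisfies |K_ℍ(z,d)| ≤ e^{s²/(4t)} t^{−3/2} (t²+s²)^{3/4} K_ℍ(τ, d), where τ = |z|²/t = (t²+s²)/t. -/
open Real MeasureTheory

/-- The complex-time heat kernel on the hyperbolic plane:
`K_ℍ(z,d) = (√2 e^{−z/4}/(4πz)^{3/2}) ∫_d^∞ u e^{−u²/(4z)}/√(cosh u − cosh d) du`. -/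
noncomputable def heatKernelC (z : ℂ) (d : ℝ) : ℂ :=
  (Real.sqrt 2 : ℂ) * Complex.exp (-z / 4) / (4 * Real.pi * z) ^ ((3 : ℂ) / 2) *
    ∫ u in Set.Ioi d,
      (u : ℂ) * Complex.exp (-(u : ℂ) ^ 2 / (4 * z)) /
        (Real.sqrt (Real.cosh u - Real.cosh d) : ℂ)

/-- The real-time heat kernel on the hyperbolic plane. -/
noncomputable def heatKernelR (t : ℝ) (d : ℝ) : ℝ :=
  Real.sqrt 2 * Real.exp (-t / 4) / (4 * Real.pi * t) ^ ((3 : ℝ) / 2) *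
    ∫ u in Set.Ioi d,
      u * Real.exp (-u ^ 2 / (4 * t)) / Real.sqrt (Real.cosh u - Real.cosh d)

/-- For `z = t + is` with `t > 0` and `d ≥ 0`,
`|K_ℍ(z,d)| ≤ e^{s²/(4t)} t^{−3/2} (t²+s²)^{3/4} K_ℍ(τ, d)` where `τ = (t²+s²)/t`. -/
theorem abs_heatKernel_complex_time_le (t s : ℝ) (ht : 0 < t) (d : ℝ) (hd : 0 ≤ d) :
    ‖heatKernelC (t + s * Complex.I) d‖ ≤
      Real.exp (s ^ 2 / (4 * t)) * t ^ (-(3 : ℝ) / 2) * (t ^ 2 + s ^ 2) ^ ((3 : ℝ) / 4) *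
        heatKernelR ((t ^ 2 + s ^ 2) / t) d := by
  set Q : ℝ := t ^ 2 + s ^ 2 with hQdef
  have hQ : 0 < Q := by positivity
  set τ : ℝ := Q / t with hτdef
  have hτ : 0 < τ := div_pos hQ ht
  set z : ℂ := (t : ℂ) + s * Complex.I with hz
  have hzre : z.re = t := by simp [hz]
  have hzim : z.im = s := by simp [hz]
  have hz0 : z ≠ 0 := by
    intro h
    rw [Complex.ext_iff] at h
    simp [hzre, hzim] at h
    exact absurd h.1 ht.ne'
  have habs : ‖z‖ = Real.sqrt Q := by
    rw [Complex.norm_def, Complex.normSq_apply, hzre, hzim]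
    congr 1; ring
  -- pointwise norm of integrand
  have hnorm : ∀ u ∈ Set.Ioi d,
      ‖(u : ℂ) * Complex.exp (-(u : ℂ) ^ 2 / (4 * z)) /
        (Real.sqrt (Real.cosh u - Real.cosh d) : ℂ)‖ =
      u * Real.exp (-u ^ 2 / (4 * τ)) / Real.sqrt (Real.cosh u - Real.cosh d) := by
    intro u hu
    have hu0 : 0 < u := lt_of_le_of_lt hd hu
    have hre : (-(u : ℂ) ^ 2 / (4 * z)).re = -u ^ 2 / (4 * τ) := by
      rw [Complex.div_re]
      simp [Complex.normSq_apply, hzre, hzim, ← Complex.ofReal_pow]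
      rw [hτdef, hQdef]
      have : t ^ 2 + s ^ 2 ≠ 0 := hQ.ne'
      have h16 : t ^ 2 * 16 + s ^ 2 * 16 ≠ 0 := by positivity
      field_simp
    rw [norm_div, norm_mul, Complex.norm_exp, hre, Complex.norm_real, Complex.norm_real,
      Real.norm_of_nonneg hu0.le, Real.norm_of_nonneg (Real.sqrt_nonneg _)]
  have hIcongr : (∫ u in Set.Ioi d, ‖(u : ℂ) * Complex.exp (-(u : ℂ) ^ 2 / (4 * z)) /
        (Real.sqrt (Real.cosh u - Real.cosh d) : ℂ)‖) =
      ∫ u in Set.Ioi d, u * Real.exp (-u ^ 2 / (4 * τ)) / Real.sqrt (Real.cosh u - Real.cosh d) :=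
    setIntegral_congr_fun measurableSet_Ioi hnorm
  have hA : ‖(Real.sqrt 2 : ℂ) * Complex.exp (-z / 4) / (4 * Real.pi * z) ^ ((3 : ℂ) / 2)‖
      = Real.sqrt 2 * Real.exp (-t / 4) / (4 * Real.pi * Real.sqrt Q) ^ ((3 : ℝ) / 2) := by
    have h1 : ((4 : ℂ) * Real.pi * z) ≠ 0 := by
      intro h
      exact hz0 (by simpa [Real.pi_ne_zero] using h)
    rw [norm_div, norm_mul, Complex.norm_real, Real.norm_of_nonneg (Real.sqrt_nonneg _),
      Complex.norm_exp,
      Complex.norm_cpow_of_ne_zero h1]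
    have h2 : (-z / 4).re = -t / 4 := by
      simp [Complex.div_re, hzre]
    have h3 : ((3 : ℂ) / 2).re = (3 : ℝ) / 2 := by norm_num [Complex.div_re]
    have h4 : ((3 : ℂ) / 2).im = 0 := by norm_num [Complex.div_im]
    have h5 : ‖(4 : ℂ) * Real.pi * z‖ = 4 * Real.pi * Real.sqrt Q := by
      rw [norm_mul, norm_mul, habs, Complex.norm_real, Real.norm_of_nonneg Real.pi_pos.le]
      norm_num
    rw [h2, h3, h4, h5, mul_zero, Real.exp_zero, div_one]
  have hexp : Real.exp (-t / 4) = Real.exp (s ^ 2 / (4 * t)) * Real.exp (-τ / 4) := by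
    rw [← Real.exp_add]
    congr 1
    rw [hτdef, hQdef]
    field_simp
    ring
  have hsq : Real.sqrt Q ^ ((3 : ℝ) / 2) = Q ^ ((3 : ℝ) / 4) := by
    rw [Real.sqrt_eq_rpow, ← Real.rpow_mul hQ.le]
    norm_num
  have hτpow : τ ^ ((3 : ℝ) / 2) = Q ^ ((3 : ℝ) / 4) * Q ^ ((3 : ℝ) / 4) * t ^ (-(3 : ℝ) / 2) := by
    have h32 : (3 : ℝ) / 2 = 3 / 4 + 3 / 4 := by norm_num
    rw [hτdef, Real.div_rpow hQ.le ht.le, neg_div, Real.rpow_neg ht.le, div_eq_mul_inv,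
      h32, Real.rpow_add hQ]
  have hpow : (4 * Real.pi * τ) ^ ((3 : ℝ) / 2)
      = (4 * Real.pi * Real.sqrt Q) ^ ((3 : ℝ) / 2) * t ^ (-(3 : ℝ) / 2) * Q ^ ((3 : ℝ) / 4) := by
    rw [Real.mul_rpow (by positivity) hτ.le, Real.mul_rpow (by positivity) (Real.sqrt_nonneg _),
      hsq, hτpow]
    ring
  have hD : (0 : ℝ) < (4 * Real.pi * Real.sqrt Q) ^ ((3 : ℝ) / 2) := by
    apply Real.rpow_pos_of_pos
    have : 0 < Real.sqrt Q := Real.sqrt_pos.2 hQ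
    positivity
  have hT : (0 : ℝ) < t ^ (-(3 : ℝ) / 2) := Real.rpow_pos_of_pos ht _
  have hR : (0 : ℝ) < Q ^ ((3 : ℝ) / 4) := Real.rpow_pos_of_pos hQ _
  simp only [heatKernelC, heatKernelR, ← hz]
  calc ‖(Real.sqrt 2 : ℂ) * Complex.exp (-z / 4) / (4 * Real.pi * z) ^ ((3 : ℂ) / 2) *
        ∫ u in Set.Ioi d, (u : ℂ) * Complex.exp (-(u : ℂ) ^ 2 / (4 * z)) /
          (Real.sqrt (Real.cosh u - Real.cosh d) : ℂ)‖
      = ‖(Real.sqrt 2 : ℂ) * Complex.exp (-z / 4) / (4 * Real.pi * z) ^ ((3 : ℂ) / 2)‖ *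
        ‖∫ u in Set.Ioi d, (u : ℂ) * Complex.exp (-(u : ℂ) ^ 2 / (4 * z)) /
          (Real.sqrt (Real.cosh u - Real.cosh d) : ℂ)‖ := norm_mul _ _
    _ ≤ ‖(Real.sqrt 2 : ℂ) * Complex.exp (-z / 4) / (4 * Real.pi * z) ^ ((3 : ℂ) / 2)‖ *
        ∫ u in Set.Ioi d, ‖(u : ℂ) * Complex.exp (-(u : ℂ) ^ 2 / (4 * z)) /
          (Real.sqrt (Real.cosh u - Real.cosh d) : ℂ)‖ :=
        mul_le_mul_of_nonneg_left (norm_integral_le_integral_norm _) (norm_nonneg _)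
    _ = Real.exp (s ^ 2 / (4 * t)) * t ^ (-(3 : ℝ) / 2) * Q ^ ((3 : ℝ) / 4) *
        (Real.sqrt 2 * Real.exp (-τ / 4) / (4 * Real.pi * τ) ^ ((3 : ℝ) / 2) *
          ∫ u in Set.Ioi d, u * Real.exp (-u ^ 2 / (4 * τ)) /
            Real.sqrt (Real.cosh u - Real.cosh d)) := by
        rw [hIcongr, hA, hexp, hpow]
        field_simp
end

section
/- Let 0 < c < 1 and u ∈ ℝ. Then (1/2π) ∫_{−∞}^∞ e^{−(2πc + iu)r}/(1 + e^{−2πr}) dr = (1/4π) csc(πc + iu/2), where csc is the complex cosecant; in particular the integral converges absolutely. -/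
open Real MeasureTheory

private lemma ofReal_cpow_eq_exp (x : ℝ) (hx : 0 < x) (s : ℂ) :
    (x : ℂ) ^ s = Complex.exp (s * Real.log x) := by
  rw [Complex.cpow_def_of_ne_zero (Complex.ofReal_ne_zero.mpr hx.ne'),
    ← Complex.ofReal_log hx.le, mul_comm]

/-- For `0 < c < 1` and `u ∈ ℝ`, the integral
`(1/2π)∫ e^{−(2πc+iu)r}/(1+e^{−2πr}) dr` converges absolutely and equals
`(1/4π) csc(πc + iu/2)`. -/
theorem integral_exp_div_one_add_exp (c : ℝ) (hc0 : 0 < c) (hc1 : c < 1) (u : ℝ) :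
    Integrable (fun r : ℝ =>
        Complex.exp (-(2 * π * c + Complex.I * u) * r) /
          ((1 + Real.exp (-2 * π * r) : ℝ) : ℂ)) ∧
      (1 / (2 * π) : ℂ) *
          (∫ r : ℝ, Complex.exp (-(2 * π * c + Complex.I * u) * r) /
            ((1 + Real.exp (-2 * π * r) : ℝ) : ℂ))
        = (1 / (4 * π) : ℂ) * (Complex.sin (π * c + Complex.I * u / 2))⁻¹ := by
  have hπ : (0:ℝ) < π := Real.pi_pos
  have hπC : (π:ℂ) ≠ 0 := Complex.ofReal_ne_zero.mpr hπ.ne'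
  set W : ℂ := (c : ℂ) + (u / (2 * π) : ℝ) * Complex.I with hWdef
  have hWre : W.re = c := by
    simp only [hWdef, Complex.add_re, Complex.ofReal_re, Complex.mul_I_re, Complex.ofReal_im,
      neg_zero, add_zero]
  have hW0 : 0 < W.re := by rw [hWre]; exact hc0
  have h1W : 0 < (1 - W).re := by
    simp [Complex.sub_re, hWre]; linarith
  -- the substitution map
  set f : ℝ → ℝ := fun r => (1 + Real.exp (-2 * π * r))⁻¹ with hfdef
  set f' : ℝ → ℝ := fun r =>
    2 * π * Real.exp (-2 * π * r) / (1 + Real.exp (-2 * π * r)) ^ 2 with hf'def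
  set G : ℝ → ℂ := fun x => (x:ℂ) ^ (1 - W - 1) * (1 - (x:ℂ)) ^ (W - 1) with hGdef
  set F : ℝ → ℂ := fun r =>
    Complex.exp (-(2 * π * c + Complex.I * u) * r) /
      ((1 + Real.exp (-2 * π * r) : ℝ) : ℂ) with hFdef
  have hEpos : ∀ r : ℝ, 0 < Real.exp (-2 * π * r) := fun r => Real.exp_pos _
  have h1E : ∀ r : ℝ, (0:ℝ) < 1 + Real.exp (-2 * π * r) := fun r => by
    have := hEpos r; linarith
  -- derivative
  have hderiv : ∀ r : ℝ, HasDerivAt f (f' r) r := by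
    intro r
    have h1 : HasDerivAt (fun x : ℝ => 1 + Real.exp (-2 * π * x))
        (Real.exp (-2 * π * r) * (-2 * π)) r := by
      have h0 : HasDerivAt (fun x : ℝ => -2 * π * x) (-2 * π) r := by
        simpa using (hasDerivAt_id r).const_mul (-2 * π)
      simpa using (h0.exp.const_add 1)
    have h2 := h1.inv (h1E r).ne'
    have e : f' r = -(Real.exp (-2 * π * r) * (-2 * π)) / (1 + Real.exp (-2 * π * r)) ^ 2 := by
      show 2 * π * Real.exp (-2 * π * r) / (1 + Real.exp (-2 * π * r)) ^ 2 = _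
      ring
    rw [e]
    exact h2
  -- injectivity
  have hinj : Set.InjOn f Set.univ := by
    intro a _ b _ hab
    simp only [hfdef] at hab
    have h2 : 1 + Real.exp (-2 * π * a) = 1 + Real.exp (-2 * π * b) := inv_inj.mp hab
    have h3 : Real.exp (-2 * π * a) = Real.exp (-2 * π * b) := by linarith
    have h4 : -2 * π * a = -2 * π * b := Real.exp_injective h3
    have hne : (-2 : ℝ) * π ≠ 0 := by positivity
    exact mul_left_cancel₀ hne h4
  -- image
  have himg : f '' Set.univ = Set.Ioo (0:ℝ) 1 := by
    ext t
    simp only [Set.image_univ, Set.mem_range, Set.mem_Ioo]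
    constructor
    · rintro ⟨r, rfl⟩
      refine ⟨by positivity, ?_⟩
      have := hEpos r
      rw [hfdef]
      rw [inv_lt_one_iff₀]
      right; linarith
    · rintro ⟨ht0, ht1⟩
      refine ⟨Real.log ((1 - t) / t) / (-2 * π), ?_⟩
      have hq : (0:ℝ) < (1 - t) / t := by
        apply div_pos <;> linarith
      have harg : -2 * π * (Real.log ((1 - t) / t) / (-2 * π)) = Real.log ((1 - t) / t) := by
        field_simp
      rw [hfdef]
      simp only
      rw [harg, Real.exp_log hq]
      field_simp
      ring
  -- key pointwise identity
  have key : ∀ r : ℝ, |f' r| • G (f r) = 2 * (π:ℂ) * F r := by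
    intro r
    have hE := hEpos r
    have h1e := h1E r
    have ht0 : (0:ℝ) < (1 + Real.exp (-2 * π * r))⁻¹ := by positivity
    have h1t : (1:ℝ) - (1 + Real.exp (-2 * π * r))⁻¹ =
        Real.exp (-2 * π * r) / (1 + Real.exp (-2 * π * r)) := by
      field_simp
      ring
    have h1t' : (0:ℝ) < Real.exp (-2 * π * r) / (1 + Real.exp (-2 * π * r)) := by positivity
    have habs : |f' r| = f' r := abs_of_pos (by simp only [hf'def]; positivity)
    simp only [hGdef, hfdef, hFdef]
    rw [habs]
    have hc1cast : (1 : ℂ) - ((((1 + Real.exp (-2 * π * r))⁻¹ : ℝ)) : ℂ) =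
        (((Real.exp (-2 * π * r) / (1 + Real.exp (-2 * π * r)) : ℝ)) : ℂ) := by
      rw [← h1t]; push_cast; ring
    rw [hc1cast, ofReal_cpow_eq_exp _ ht0, ofReal_cpow_eq_exp _ h1t',
      Real.log_inv, Real.log_div hE.ne' h1e.ne', Real.log_exp]
    have hWr : -(2 * (π:ℂ) * c + Complex.I * u) * r = W * (-(2 * π * r)) := by
      simp only [hWdef]
      push_cast
      field_simp
    rw [hWr]
    have hsum : (1 - W - 1) * ((-Real.log (1 + Real.exp (-2 * π * r)) : ℝ) : ℂ)
        = W * ((Real.log (1 + Real.exp (-2 * π * r)) : ℝ) : ℂ) := by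
      push_cast; ring
    have hsum2 : (W - 1) * (((-2 * π * r - Real.log (1 + Real.exp (-2 * π * r))) : ℝ) : ℂ)
        = W * (-(2 * π * r)) + ((2 * π * r : ℝ) : ℂ)
          - W * ((Real.log (1 + Real.exp (-2 * π * r)) : ℝ) : ℂ)
          + ((Real.log (1 + Real.exp (-2 * π * r)) : ℝ) : ℂ) := by
      push_cast; ring
    rw [hsum, hsum2, ← Complex.exp_add]
    have hexp : W * ((Real.log (1 + Real.exp (-2 * π * r)) : ℝ) : ℂ) +
        (W * (-(2 * ↑π * ↑r)) + ((2 * π * r : ℝ) : ℂ)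
          - W * ((Real.log (1 + Real.exp (-2 * π * r)) : ℝ) : ℂ)
          + ((Real.log (1 + Real.exp (-2 * π * r)) : ℝ) : ℂ))
        = ((Real.log (1 + Real.exp (-2 * π * r)) : ℝ) : ℂ)
          + (W * (-(2 * ↑π * ↑r)) + ((2 * π * r : ℝ) : ℂ)) := by ring
    rw [hexp, Complex.exp_add, Complex.exp_add, ← Complex.ofReal_exp,
      ← Complex.ofReal_exp, Real.exp_log h1e]
    have hEinv : Real.exp (2 * π * r) = (Real.exp (-2 * π * r))⁻¹ := by
      rw [← Real.exp_neg]; ring_nf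
    rw [hEinv]
    simp only [hf'def]
    rw [Complex.real_smul]
    have alg : ∀ (X : ℂ) (p e : ℝ), 0 < e → 0 < 1 + e →
        ((2 * p * e / (1 + e) ^ 2 : ℝ) : ℂ) * (((1 + e : ℝ) : ℂ) * (X * ((e⁻¹ : ℝ) : ℂ))) =
          2 * (p : ℂ) * (X / ((1 + e : ℝ) : ℂ)) := by
      intro X p e he h1e
      have he' : (e : ℂ) ≠ 0 := Complex.ofReal_ne_zero.mpr he.ne'
      have h1e' : ((1 + e : ℝ) : ℂ) ≠ 0 := Complex.ofReal_ne_zero.mpr h1e.ne'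
      have h1e'' : (1 : ℂ) + (e : ℂ) ≠ 0 := by
        rw [← Complex.ofReal_one, ← Complex.ofReal_add]; exact h1e'
      push_cast
      field_simp
    exact alg _ π (Real.exp (-2 * π * r)) hE h1e
  -- derivative within
  have hderivW : ∀ x ∈ Set.univ, HasDerivWithinAt f (f' x) Set.univ x :=
    fun x _ => (hderiv x).hasDerivWithinAt
  -- beta integral facts
  have hbetaInt : IntegrableOn G (Set.Ioo (0:ℝ) 1) := by
    have := (Complex.betaIntegral_convergent h1W hW0).1
    exact this.mono_set Set.Ioo_subset_Ioc_self
  have hbetaval : Complex.betaIntegral (1 - W) W = (π:ℂ) / Complex.sin (π * W) := by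
    have h := Complex.Gamma_mul_Gamma_eq_betaIntegral h1W hW0
    rw [sub_add_cancel, Complex.Gamma_one, one_mul] at h
    rw [← h, mul_comm, Complex.Gamma_mul_Gamma_one_sub]
  have hbeta_eq : Complex.betaIntegral (1 - W) W = ∫ x in Set.Ioo (0:ℝ) 1, G x := by
    rw [Complex.betaIntegral, intervalIntegral.integral_of_le zero_le_one,
      integral_Ioc_eq_integral_Ioo]
  -- integrability
  have hint2 : Integrable (fun r => |f' r| • G (f r)) := by
    rw [← integrableOn_univ]
    rw [← integrableOn_image_iff_integrableOn_abs_deriv_smul MeasurableSet.univ hderivW hinj G]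
    rwa [himg]
  have hintF : Integrable F := by
    simp only [key] at hint2
    have h2πC : (2 * (π:ℂ)) ≠ 0 := by
      simp [hπC]
    have := hint2.const_mul ((2 * (π:ℂ))⁻¹)
    simpa only [← mul_assoc, inv_mul_cancel₀ h2πC, one_mul] using this
  -- integral identity
  have hchange : ∫ x in Set.Ioo (0:ℝ) 1, G x = ∫ r, |f' r| • G (f r) := by
    rw [← himg, integral_image_eq_integral_abs_deriv_smul MeasurableSet.univ hderivW hinj G,
      setIntegral_univ]
  have hintval : ∫ r, F r = (2 * (π:ℂ))⁻¹ * ((π:ℂ) / Complex.sin (π * W)) := by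
    have h2πC : (2 * (π:ℂ)) ≠ 0 := by simp [hπC]
    have h1 : (2 * (π:ℂ)) * ∫ r, F r = (π:ℂ) / Complex.sin (π * W) := by
      rw [← hbetaval, hbeta_eq, hchange]
      simp only [key]
      rw [integral_const_mul]
    rw [← h1, ← mul_assoc, inv_mul_cancel₀ h2πC, one_mul]
  refine ⟨hintF, ?_⟩
  have hsin : (π:ℂ) * W = (π:ℂ) * c + Complex.I * u / 2 := by
    simp only [hWdef]
    push_cast
    field_simp
  rw [hintval, hsin, div_eq_mul_inv]
  have hgen : ∀ S : ℂ, (1 / (2 * (π:ℂ))) * ((2 * (π:ℂ))⁻¹ * ((π:ℂ) * S)) =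
      1 / (4 * (π:ℂ)) * S := by
    intro S
    field_simp
    ring
  exact hgen _
end

section
/- Fix δ > 0 and z = t+is with t > 0. Set η = t/(4(t²+s²)) and γ = log(1 + (δ/(2π))²). Then for every integer q ≥ 3, (√π e^{−t/4}/(4q√|z|)) · Σ_{n=1}^{q−1} (1/sin(nπ/q)) · (1 + qδ sin²(nπ/q)(4π+qδ)/(2π²))^{−η·h(n,q,δ)} ≤ (e^{−t/4}/√(π|z|)) · (δ/(2π))^{−2ηγ} · (ζ(1+2ηγ) + π), where h(n,q,δ) = log(1 + qδ sin²(nπ/q)(4π+qδ)/(2π²)) and ζ is the Riemann zeta function. -/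
open Real

/-- The Riemann zeta function for real argument `s > 1`, `ζ(s) = Σ_{n≥1} n^{−s}`. -/
noncomputable def zetaReal (s : ℝ) : ℝ := ∑' n : ℕ, ((n : ℝ) + 1) ^ (-s)

lemma auxA (δ σ Q M : ℝ) (hδ : 0 < δ) (hQ : 0 < Q) (hM : 0 < M) (hσ : 0 ≤ σ)
    (h : 2 * M ≤ Q * σ) :
    M ^ 2 * (δ / (2 * π)) ^ 2 ≤ Q * δ * σ ^ 2 * (4 * π + Q * δ) / (2 * π ^ 2) := by
  have hπ := Real.pi_pos
  have h4 : 4 * M ^ 2 ≤ Q ^ 2 * σ ^ 2 := by nlinarith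
  have heq : M ^ 2 * (δ / (2 * π)) ^ 2 = M ^ 2 * δ ^ 2 / (4 * π ^ 2) := by
    field_simp; ring
  rw [heq, div_le_div_iff₀ (by positivity) (by positivity)]
  nlinarith [mul_le_mul_of_nonneg_left h4 (by positivity : (0:ℝ) ≤ π ^ 2 * δ ^ 2),
    mul_nonneg (mul_nonneg (mul_nonneg (by positivity : (0:ℝ) ≤ π ^ 3) hQ.le) hδ.le)
      (sq_nonneg σ),
    mul_nonneg (mul_nonneg (sq_nonneg π) (sq_nonneg δ)) (sq_nonneg M)]

lemma auxPow (η γ c M A : ℝ) (hη : 0 < η) (hc : 0 < c)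
    (hγdef : γ = Real.log (1 + c ^ 2)) (hM : 1 ≤ M) (hA : M ^ 2 * c ^ 2 ≤ A) :
    (1 + A) ^ (-(η * Real.log (1 + A))) ≤ c ^ (-(2 * η * γ)) * M ^ (-(2 * η * γ)) := by
  have hM0 : 0 < M := by linarith
  have hA0 : 0 < A := lt_of_lt_of_le (by positivity) hA
  have hγ : 0 < γ := by
    rw [hγdef]; exact Real.log_pos (by nlinarith [mul_pos hc hc])
  set L : ℝ := Real.log (1 + A) with hL
  set X : ℝ := 2 * Real.log M + 2 * Real.log c with hX
  have hLγ : γ ≤ L := by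
    rw [hγdef, hL]
    apply Real.log_le_log (by positivity)
    have hM2 : 1 ≤ M ^ 2 := by nlinarith
    nlinarith [mul_le_mul_of_nonneg_right hM2 (sq_nonneg c)]
  have hLX : X ≤ L := by
    have h1 : Real.log (M ^ 2 * c ^ 2) = X := by
      rw [Real.log_mul (by positivity) (by positivity), Real.log_pow, Real.log_pow, hX]
      push_cast; ring
    rw [← h1, hL]
    apply Real.log_le_log (by positivity)
    linarith
  have hL2 : γ * X ≤ L ^ 2 := by
    nlinarith [mul_nonneg hγ.le (sub_nonneg.2 hLX),
      mul_nonneg (le_trans hγ.le hLγ) (sub_nonneg.2 hLγ)]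
  have hpow : (1 + A) ^ (-(η * L)) = Real.exp (-(η * L ^ 2)) := by
    rw [Real.rpow_def_of_pos (by positivity), ← hL]; ring_nf
  have hid : c ^ (-(2 * η * γ)) * M ^ (-(2 * η * γ)) = Real.exp (-(η * (γ * X))) := by
    rw [Real.rpow_def_of_pos hc, Real.rpow_def_of_pos hM0, ← Real.exp_add, hX]
    ring_nf
  rw [hpow, hid]
  apply Real.exp_le_exp.mpr
  linarith [mul_le_mul_of_nonneg_left hL2 hη.le]

set_option maxHeartbeats 1000000 in
/-- The key estimate in the analysis of the elliptic heat trace: for `δ > 0`,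
`z = t+is` with `t > 0`, `η = t/(4(t²+s²))`, `γ = log(1+(δ/2π)²)`, and `q ≥ 3`,
`(√π e^{−t/4}/(4q√|z|)) Σ_{n=1}^{q−1} (1/sin(nπ/q))(1 + qδ sin²(nπ/q)(4π+qδ)/(2π²))^{−η h(n,q,δ)}
  ≤ (e^{−t/4}/√(π|z|)) (δ/2π)^{−2ηγ} (ζ(1+2ηγ) + π)`,
where `h(n,q,δ) = log(1 + qδ sin²(nπ/q)(4π+qδ)/(2π²))` and `|z| = √(t²+s²)`. -/
theorem elliptic_trace_sum_bound (δ t s : ℝ) (hδ : 0 < δ) (ht : 0 < t)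
    (q : ℕ) (hq : 3 ≤ q) :
    Real.sqrt π * Real.exp (-t / 4) / (4 * q * Real.sqrt (Real.sqrt (t ^ 2 + s ^ 2))) *
        ∑ n ∈ Finset.Icc 1 (q - 1),
          (Real.sin (n * π / q))⁻¹ *
            (1 + q * δ * Real.sin (n * π / q) ^ 2 * (4 * π + q * δ) / (2 * π ^ 2)) ^
              (-(t / (4 * (t ^ 2 + s ^ 2)) *
                Real.log (1 + q * δ * Real.sin (n * π / q) ^ 2 * (4 * π + q * δ) / (2 * π ^ 2))))
      ≤ Real.exp (-t / 4) / Real.sqrt (π * Real.sqrt (t ^ 2 + s ^ 2)) *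
          (δ / (2 * π)) ^
            (-(2 * (t / (4 * (t ^ 2 + s ^ 2))) * Real.log (1 + (δ / (2 * π)) ^ 2))) *
          (zetaReal (1 + 2 * (t / (4 * (t ^ 2 + s ^ 2))) * Real.log (1 + (δ / (2 * π)) ^ 2)) + π) := by
  have hπ := Real.pi_pos
  set c : ℝ := δ / (2 * π) with hc
  have hc0 : 0 < c := by rw [hc]; positivity
  set γ : ℝ := Real.log (1 + c ^ 2) with hγdef
  have hγ : 0 < γ := by
    rw [hγdef]; exact Real.log_pos (by nlinarith [mul_pos hc0 hc0])
  have hz : (0:ℝ) < t ^ 2 + s ^ 2 := by positivity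
  set η : ℝ := t / (4 * (t ^ 2 + s ^ 2)) with hηdef
  have hη0 : 0 < η := by rw [hηdef]; positivity
  set p : ℝ := 1 + 2 * η * γ with hpdef
  have hp1 : 1 < p := by rw [hpdef]; nlinarith
  set Z : ℝ := zetaReal p with hZdef
  have hq0 : (0:ℝ) < q := by positivity
  have hsummable : Summable (fun n : ℕ => ((n : ℝ) + 1) ^ (-p)) := by
    have h1 : Summable (fun n : ℕ => (n : ℝ) ^ (-p)) :=
      Real.summable_nat_rpow.mpr (by linarith)
    have h2 := (summable_nat_add_iff 1).mpr h1
    refine h2.congr fun n => ?_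
    push_cast
    rfl
  have hZ0 : 0 ≤ Z := tsum_nonneg fun n => Real.rpow_nonneg (by positivity) _
  -- tail bound
  have htail : ∑ n ∈ Finset.Icc 1 (q - 1), ((n : ℝ)) ^ (-p) ≤ Z := by
    have hIcc : Finset.Icc 1 (q - 1) = Finset.Ico 1 q := by
      rw [← Finset.Ico_add_one_right_eq_Icc]; congr 1; omega
    rw [hIcc, Finset.sum_Ico_eq_sum_range]
    refine le_trans (le_of_eq (Finset.sum_congr rfl fun i _ => ?_))
      (Summable.sum_le_tsum (Finset.range (q - 1))
        (fun i _ => Real.rpow_nonneg (by positivity) _) hsummable)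
    push_cast
    rw [add_comm]
  -- reflection
  have hrefl : ∑ n ∈ Finset.Icc 1 (q - 1), ((q - n : ℕ) : ℝ) ^ (-p)
      = ∑ n ∈ Finset.Icc 1 (q - 1), ((n : ℝ)) ^ (-p) := by
    refine Finset.sum_nbij' (fun n => q - n) (fun n => q - n) ?_ ?_ ?_ ?_ (fun a _ => rfl) <;>
      (intro a ha; simp only [Finset.mem_Icc] at *; omega)
  -- per-term bound
  have hterm : ∀ n ∈ Finset.Icc 1 (q - 1),
      (Real.sin (n * π / q))⁻¹ *
        (1 + q * δ * Real.sin (n * π / q) ^ 2 * (4 * π + q * δ) / (2 * π ^ 2)) ^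
          (-(η * Real.log (1 + q * δ * Real.sin (n * π / q) ^ 2 * (4 * π + q * δ) / (2 * π ^ 2))))
      ≤ (q / 2) * c ^ (-(2 * η * γ)) * (((n : ℝ)) ^ (-p) + ((q - n : ℕ) : ℝ) ^ (-p)) := by
    intro n hn
    rw [Finset.mem_Icc] at hn
    obtain ⟨hn1, hn2⟩ := hn
    set m : ℕ := min n (q - n) with hm
    have hm1 : 1 ≤ m := by omega
    have hm2 : 2 * m ≤ q := by omega
    have hmR : (1:ℝ) ≤ (m:ℝ) := by exact_mod_cast hm1
    have hm0 : (0:ℝ) < (m:ℝ) := by linarith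
    have hsin_eq : Real.sin (n * π / q) = Real.sin (m * π / q) := by
      rcases min_choice n (q - n) with h | h <;> rw [← hm] at h <;> rw [h]
      have hcast : ((q - n : ℕ) : ℝ) = (q : ℝ) - n := by
        push_cast [Nat.cast_sub (by omega : n ≤ q)]; ring
      rw [hcast]
      have heq2 : ((q:ℝ) - n) * π / q = π - n * π / q := by
        field_simp
      rw [heq2, Real.sin_pi_sub]
    have hjordan : 2 * (m:ℝ) / q ≤ Real.sin (n * π / q) := by
      rw [hsin_eq]
      have hx0 : (0:ℝ) ≤ m * π / q := by positivity
      have hx1 : (m:ℝ) * π / q ≤ π / 2 := by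
        rw [div_le_div_iff₀ hq0 (by norm_num : (0:ℝ) < 2)]
        have h2m : (2:ℝ) * m ≤ q := by exact_mod_cast hm2
        nlinarith
      calc 2 * (m:ℝ) / q = 2 / π * ((m:ℝ) * π / q) := by
            field_simp
        _ ≤ Real.sin ((m:ℝ) * π / q) := Real.mul_le_sin hx0 hx1
    have hσ0 : 0 < Real.sin (n * π / q) := lt_of_lt_of_le (by positivity) hjordan
    have hqσ : 2 * (m:ℝ) ≤ q * Real.sin (n * π / q) := by
      rw [div_le_iff₀ hq0] at hjordan; linarith
    have hAm := auxA δ (Real.sin (n * π / q)) q m hδ hq0 hm0 hσ0.le hqσ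
    rw [← hc] at hAm
    have hpowle := auxPow η γ c (m:ℝ)
      (q * δ * Real.sin (n * π / q) ^ 2 * (4 * π + q * δ) / (2 * π ^ 2))
      hη0 hc0 hγdef hmR hAm
    have hbase : (0:ℝ) < 1 + q * δ * Real.sin (n * π / q) ^ 2 * (4 * π + q * δ) / (2 * π ^ 2) := by
      positivity
    have hinv : (Real.sin (n * π / q))⁻¹ ≤ q / (2 * (m:ℝ)) := by
      calc (Real.sin (n * π / q))⁻¹ ≤ (2 * (m:ℝ) / q)⁻¹ :=
            inv_anti₀ (by positivity) hjordan
        _ = q / (2 * (m:ℝ)) := by rw [inv_div]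
    have hcomb : (Real.sin (n * π / q))⁻¹ *
        (1 + q * δ * Real.sin (n * π / q) ^ 2 * (4 * π + q * δ) / (2 * π ^ 2)) ^
          (-(η * Real.log (1 + q * δ * Real.sin (n * π / q) ^ 2 * (4 * π + q * δ) / (2 * π ^ 2))))
        ≤ (q / (2 * (m:ℝ))) * (c ^ (-(2 * η * γ)) * (m:ℝ) ^ (-(2 * η * γ))) :=
      mul_le_mul hinv hpowle (Real.rpow_nonneg hbase.le _) (by positivity)
    have heq : (q / (2 * (m:ℝ))) * (c ^ (-(2 * η * γ)) * (m:ℝ) ^ (-(2 * η * γ)))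
        = (q / 2) * c ^ (-(2 * η * γ)) * ((m:ℝ)) ^ (-p) := by
      rw [hpdef, show -(1 + 2 * η * γ) = (-1) + (-(2 * η * γ)) by ring,
        Real.rpow_add hm0, Real.rpow_neg_one]
      field_simp
    have hmin : ((m:ℝ)) ^ (-p) ≤ ((n : ℝ)) ^ (-p) + ((q - n : ℕ) : ℝ) ^ (-p) := by
      rcases min_choice n (q - n) with h | h <;> rw [← hm] at h <;> rw [h]
      · have := Real.rpow_nonneg (show (0:ℝ) ≤ ((q - n : ℕ) : ℝ) by positivity) (-p)
        linarith
      · have := Real.rpow_nonneg (show (0:ℝ) ≤ ((n : ℕ) : ℝ) by positivity) (-p)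
        linarith
    calc (Real.sin (n * π / q))⁻¹ *
        (1 + q * δ * Real.sin (n * π / q) ^ 2 * (4 * π + q * δ) / (2 * π ^ 2)) ^
          (-(η * Real.log (1 + q * δ * Real.sin (n * π / q) ^ 2 * (4 * π + q * δ) / (2 * π ^ 2))))
        ≤ (q / 2) * c ^ (-(2 * η * γ)) * ((m:ℝ)) ^ (-p) := hcomb.trans_eq heq
      _ ≤ (q / 2) * c ^ (-(2 * η * γ)) * (((n : ℝ)) ^ (-p) + ((q - n : ℕ) : ℝ) ^ (-p)) :=
          mul_le_mul_of_nonneg_left hmin (by positivity)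
  -- sum bound
  have hsum : ∑ n ∈ Finset.Icc 1 (q - 1),
      (Real.sin (n * π / q))⁻¹ *
        (1 + q * δ * Real.sin (n * π / q) ^ 2 * (4 * π + q * δ) / (2 * π ^ 2)) ^
          (-(η * Real.log (1 + q * δ * Real.sin (n * π / q) ^ 2 * (4 * π + q * δ) / (2 * π ^ 2))))
      ≤ q * c ^ (-(2 * η * γ)) * Z := by
    refine le_trans (Finset.sum_le_sum hterm) ?_
    rw [← Finset.mul_sum, Finset.sum_add_distrib, hrefl]
    have : (∑ n ∈ Finset.Icc 1 (q - 1), ((n : ℝ)) ^ (-p)) +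
        (∑ n ∈ Finset.Icc 1 (q - 1), ((n : ℝ)) ^ (-p)) ≤ 2 * Z := by linarith
    calc (q / 2) * c ^ (-(2 * η * γ)) *
        ((∑ n ∈ Finset.Icc 1 (q - 1), ((n : ℝ)) ^ (-p)) +
         ∑ n ∈ Finset.Icc 1 (q - 1), ((n : ℝ)) ^ (-p))
        ≤ (q / 2) * c ^ (-(2 * η * γ)) * (2 * Z) :=
          mul_le_mul_of_nonneg_left this (by positivity)
      _ = q * c ^ (-(2 * η * γ)) * Z := by ring
  -- final assembly
  set u : ℝ := Real.sqrt (Real.sqrt (t ^ 2 + s ^ 2)) with hu_def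
  have hu : 0 < u := by
    rw [hu_def]; exact Real.sqrt_pos.mpr (Real.sqrt_pos.mpr hz)
  have hsπ : 0 < Real.sqrt π := Real.sqrt_pos.mpr hπ
  have hsq : Real.sqrt π * Real.sqrt π = π := Real.mul_self_sqrt hπ.le
  have hsplit : Real.sqrt (π * Real.sqrt (t ^ 2 + s ^ 2)) = Real.sqrt π * u := by
    rw [hu_def, Real.sqrt_mul hπ.le]
  have hE : 0 < c ^ (-(2 * η * γ)) := Real.rpow_pos_of_pos hc0 _
  have hex : 0 < Real.exp (-t / 4) := Real.exp_pos _
  refine le_trans (mul_le_mul_of_nonneg_left hsum (by positivity)) ?_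
  rw [hsplit]
  have hq' : (q:ℝ) ≠ 0 := ne_of_gt hq0
  have lhs_eq : Real.sqrt π * Real.exp (-t / 4) / (4 * q * u) * (q * c ^ (-(2 * η * γ)) * Z)
      = (Real.sqrt π * Z / 4) * (Real.exp (-t / 4) * c ^ (-(2 * η * γ)) / u) := by
    field_simp
  have rhs_eq : Real.exp (-t / 4) / (Real.sqrt π * u) * c ^ (-(2 * η * γ)) * (Z + π)
      = ((Z + π) / Real.sqrt π) * (Real.exp (-t / 4) * c ^ (-(2 * η * γ)) / u) := by
    field_simp
  rw [lhs_eq, rhs_eq]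
  apply mul_le_mul_of_nonneg_right _ (by positivity)
  rw [div_le_div_iff₀ (by norm_num : (0:ℝ) < 4) hsπ]
  have h2 : Real.sqrt π * Z * Real.sqrt π = π * Z := by
    rw [mul_comm (Real.sqrt π) Z, mul_assoc, hsq]; ring
  rw [h2]
  nlinarith [mul_le_mul_of_nonneg_right Real.pi_le_four hZ0]
end
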